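/- arXiv:2605.03113 — 2 statements merged into one kernel-verified Lean document; each statement's English description precedes it below -/
import Mathlib

section
/- Let C be a tidy LD category, 𝔣 a set of morphisms of C whose targets are all ⊗-products, u ∈ 𝔜 a non-empty word, f ∈ 𝔣, Ā ∈ Ob(C)^{|u|}, and h a morphism of C with target H^f_u(Ā) such that τ^f_u(Ā)∘h is not 𝔣-analysable. Then: (i) h is neither a component of δˡ, δʳ, ᾱ or ᾱ⁻¹, nor of the form id⅋h' or h'⅋id for any morphism h'; (ii) if h is a component of α then u = a⁻¹, and if h is a component of α⁻¹ then u = a; (iii) if h = id⊗h' for some morphism h', then ter(u) = a and τ^f_{init(u)}(Ā_{≥2})∘h' is not 𝔣-analysable; (iv) if h = h'⊗id for some morphism h', then ter(u) = a⁻¹ and τ^f_{init(u)}(Ā_{≤|u|−1})∘h' is not 𝔣-analysable. -/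
open CategoryTheory

namespace LDCoherence

universe v u v₁ u₁ v₂ u₂

/-- A (unitless) linearly distributive category structure on a category `C`. -/
structure LD (C : Type u) [Category.{v} C] where
  ot : C → C → C
  pa : C → C → C
  otHom : ∀ {X₁ Y₁ X₂ Y₂ : C}, (X₁ ⟶ Y₁) → (X₂ ⟶ Y₂) → (ot X₁ X₂ ⟶ ot Y₁ Y₂)
  paHom : ∀ {X₁ Y₁ X₂ Y₂ : C}, (X₁ ⟶ Y₁) → (X₂ ⟶ Y₂) → (pa X₁ X₂ ⟶ pa Y₁ Y₂)
  otHom_id : ∀ X Y : C, otHom (𝟙 X) (𝟙 Y) = 𝟙 (ot X Y)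
  otHom_comp :
    ∀ {X₁ Y₁ Z₁ X₂ Y₂ Z₂ : C} (f₁ : X₁ ⟶ Y₁) (g₁ : Y₁ ⟶ Z₁) (f₂ : X₂ ⟶ Y₂) (g₂ : Y₂ ⟶ Z₂),
      otHom (f₁ ≫ g₁) (f₂ ≫ g₂) = otHom f₁ f₂ ≫ otHom g₁ g₂
  paHom_id : ∀ X Y : C, paHom (𝟙 X) (𝟙 Y) = 𝟙 (pa X Y)
  paHom_comp :
    ∀ {X₁ Y₁ Z₁ X₂ Y₂ Z₂ : C} (f₁ : X₁ ⟶ Y₁) (g₁ : Y₁ ⟶ Z₁) (f₂ : X₂ ⟶ Y₂) (g₂ : Y₂ ⟶ Z₂),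
      paHom (f₁ ≫ g₁) (f₂ ≫ g₂) = paHom f₁ f₂ ≫ paHom g₁ g₂
  α : ∀ A B E : C, ot A (ot B E) ⟶ ot (ot A B) E
  αInv : ∀ A B E : C, ot (ot A B) E ⟶ ot A (ot B E)
  pα : ∀ A B E : C, pa A (pa B E) ⟶ pa (pa A B) E
  pαInv : ∀ A B E : C, pa (pa A B) E ⟶ pa A (pa B E)
  δl : ∀ A B E : C, ot A (pa B E) ⟶ pa (ot A B) E
  δr : ∀ A B E : C, ot (pa A B) E ⟶ pa A (ot B E)
  α_αInv : ∀ A B E : C, α A B E ≫ αInv A B E = 𝟙 _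
  αInv_α : ∀ A B E : C, αInv A B E ≫ α A B E = 𝟙 _
  pα_pαInv : ∀ A B E : C, pα A B E ≫ pαInv A B E = 𝟙 _
  pαInv_pα : ∀ A B E : C, pαInv A B E ≫ pα A B E = 𝟙 _
  α_natural :
    ∀ {A A' B B' E E' : C} (f : A ⟶ A') (g : B ⟶ B') (h : E ⟶ E'),
      otHom f (otHom g h) ≫ α A' B' E' = α A B E ≫ otHom (otHom f g) h
  pα_natural :
    ∀ {A A' B B' E E' : C} (f : A ⟶ A') (g : B ⟶ B') (h : E ⟶ E'),
      paHom f (paHom g h) ≫ pα A' B' E' = pα A B E ≫ paHom (paHom f g) h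
  δl_natural :
    ∀ {A A' B B' E E' : C} (f : A ⟶ A') (g : B ⟶ B') (h : E ⟶ E'),
      otHom f (paHom g h) ≫ δl A' B' E' = δl A B E ≫ paHom (otHom f g) h
  δr_natural :
    ∀ {A A' B B' E E' : C} (f : A ⟶ A') (g : B ⟶ B') (h : E ⟶ E'),
      otHom (paHom f g) h ≫ δr A' B' E' = δr A B E ≫ paHom f (otHom g h)
  P1 : ∀ A B E D : C,
    α A B (ot E D) ≫ α (ot A B) E D =
      otHom (𝟙 A) (α B E D) ≫ α A (ot B E) D ≫ otHom (α A B E) (𝟙 D)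
  P2 : ∀ A B E D : C,
    α A B (pa E D) ≫ δl (ot A B) E D =
      otHom (𝟙 A) (δl B E D) ≫ δl A (ot B E) D ≫ paHom (α A B E) (𝟙 D)
  P3 : ∀ A B E D : C,
    otHom (𝟙 A) (δr B E D) ≫ δl A B (ot E D) =
      α A (pa B E) D ≫ otHom (δl A B E) (𝟙 D) ≫ δr (ot A B) E D
  P4 : ∀ A B E D : C,
    δl A B (pa E D) ≫ pα (ot A B) E D =
      otHom (𝟙 A) (pα B E D) ≫ δl A (pa B E) D ≫ paHom (δl A B E) (𝟙 D)
  P5 : ∀ A B E D : C,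
    δr A B (ot E D) ≫ paHom (𝟙 A) (α B E D) =
      α (pa A B) E D ≫ otHom (δr A B E) (𝟙 D) ≫ δr A (ot B E) D
  P6 : ∀ A B E D : C,
    δl (pa A B) E D ≫ paHom (δr A B E) (𝟙 D) =
      δr A B (pa E D) ≫ paHom (𝟙 A) (δl B E D) ≫ pα A (ot B E) D
  P7 : ∀ A B E D : C,
    otHom (pα A B E) (𝟙 D) ≫ δr (pa A B) E D =
      δr A (pa B E) D ≫ paHom (𝟙 A) (δr B E D) ≫ pα A B (ot E D)
  P8 : ∀ A B E D : C,
    pα A B (pa E D) ≫ pα (pa A B) E D =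
      paHom (𝟙 A) (pα B E D) ≫ pα A (pa B E) D ≫ paHom (pα A B E) (𝟙 D)

variable {C : Type u} [Category.{v} C]

/-- Tidiness of a linearly distributive category. -/
def LD.Tidy (L : LD C) : Prop :=
  (∀ A₁ A₂ B₁ B₂ : C, L.ot A₁ A₂ = L.ot B₁ B₂ → A₁ = B₁ ∧ A₂ = B₂) ∧
  (∀ A₁ A₂ B₁ B₂ : C, L.pa A₁ A₂ = L.pa B₁ B₂ → A₁ = B₁ ∧ A₂ = B₂) ∧
  (∀ A₁ A₂ B₁ B₂ : C, L.ot A₁ A₂ ≠ L.pa B₁ B₂)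

/-- Generators of the free monoid 𝔜. -/
inductive YGen : Type
  | a : YGen
  | ainv : YGen

/-- Generators of the free monoid 𝔝. -/
inductive ZGen : Type
  | pa : ZGen
  | painv : ZGen
  | dl : ZGen
  | dr : ZGen

/-- A word in the free monoid 𝔜 together with a matching vector of objects:
each letter carries the object of the vector that it consumes in the recursions
defining `H`, `L`, `R` and `τ`.  The outermost constructor is the terminal letter. -/
inductive YW (C : Type u) : Type u
  | nil : YW C
  | a : C → YW C → YW C
  | ainv : C → YW C → YW C

/-- The underlying word in 𝔜 of a word-with-vector. -/
def YW.word {C : Type u} : YW C → List YGen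
  | .nil => []
  | .a _ w => YGen.a :: w.word
  | .ainv _ w => YGen.ainv :: w.word

/-- A word in the free monoid 𝔝 together with a matching vector of objects. -/
inductive ZW (C : Type u) : Type u
  | nil : ZW C
  | pa : C → ZW C → ZW C
  | painv : C → ZW C → ZW C
  | dl : C → ZW C → ZW C
  | dr : C → ZW C → ZW C

/-- The underlying word in 𝔝 of a word-with-vector. -/
def ZW.word {C : Type u} : ZW C → List ZGen
  | .nil => []
  | .pa _ w => ZGen.pa :: w.word
  | .painv _ w => ZGen.painv :: w.word
  | .dl _ w => ZGen.dl :: w.word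
  | .dr _ w => ZGen.dr :: w.word

/-- The functor `H^f_u` (object part), for `f` with source `X` and target an ⊗-product. -/
def Hot (L : LD C) (X : C) : YW C → C
  | .nil => X
  | .a A w => L.ot A (Hot L X w)
  | .ainv A w => L.ot (Hot L X w) A

/-- The functor `L^f_u` (object part), for `f` with target `L.ot Y Z`. -/
def Lot (L : LD C) (Y : C) : YW C → C
  | .nil => Y
  | .a A w => L.ot A (Lot L Y w)
  | .ainv _ w => Lot L Y w

/-- The functor `R^f_u` (object part), for `f` with target `L.ot Y Z`. -/
def Rot (L : LD C) (Z : C) : YW C → C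
  | .nil => Z
  | .a _ w => Rot L Z w
  | .ainv A w => L.ot (Rot L Z w) A

/-- The natural transformation `τ^f_u` (componentwise). -/
def tau (L : LD C) {X Y Z : C} (f : X ⟶ L.ot Y Z) :
    (w : YW C) → (Hot L X w ⟶ L.ot (Lot L Y w) (Rot L Z w))
  | .nil => f
  | .a A w => L.otHom (𝟙 A) (tau L f w) ≫ L.α A (Lot L Y w) (Rot L Z w)
  | .ainv A w => L.otHom (tau L f w) (𝟙 A) ≫ L.αInv (Lot L Y w) (Rot L Z w) A

/-- The functor `H^f_u` (object part), for `f` with source `X` and target a ⅋-product. -/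
def Hpa (L : LD C) (X : C) : ZW C → C
  | .nil => X
  | .pa A w => L.pa A (Hpa L X w)
  | .painv A w => L.pa (Hpa L X w) A
  | .dl A w => L.ot A (Hpa L X w)
  | .dr A w => L.ot (Hpa L X w) A

/-- The functor `L^f_u` (object part), for `f` with target `L.pa Y Z`. -/
def Lpa (L : LD C) (Y : C) : ZW C → C
  | .nil => Y
  | .pa A w => L.pa A (Lpa L Y w)
  | .painv _ w => Lpa L Y w
  | .dl A w => L.ot A (Lpa L Y w)
  | .dr _ w => Lpa L Y w

/-- The functor `R^f_u` (object part), for `f` with target `L.pa Y Z`. -/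
def Rpa (L : LD C) (Z : C) : ZW C → C
  | .nil => Z
  | .pa _ w => Rpa L Z w
  | .painv A w => L.pa (Rpa L Z w) A
  | .dl _ w => Rpa L Z w
  | .dr A w => L.ot (Rpa L Z w) A

/-- The natural transformation `κ^f_u` (componentwise). -/
def kappa (L : LD C) {X Y Z : C} (f : X ⟶ L.pa Y Z) :
    (w : ZW C) → (Hpa L X w ⟶ L.pa (Lpa L Y w) (Rpa L Z w))
  | .nil => f
  | .pa A w => L.paHom (𝟙 A) (kappa L f w) ≫ L.pα A (Lpa L Y w) (Rpa L Z w)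
  | .painv A w => L.paHom (kappa L f w) (𝟙 A) ≫ L.pαInv (Lpa L Y w) (Rpa L Z w) A
  | .dl A w => L.otHom (𝟙 A) (kappa L f w) ≫ L.δl A (Lpa L Y w) (Rpa L Z w)
  | .dr A w => L.otHom (kappa L f w) (𝟙 A) ≫ L.δr (Lpa L Y w) (Rpa L Z w) A

/-- `h` is a component of the associator `α`. -/
def IsAlphaComp (L : LD C) {W T : C} (h : W ⟶ T) : Prop :=
  ∃ (A B E : C) (h₁ : W = L.ot A (L.ot B E)) (h₂ : L.ot (L.ot A B) E = T),
    h = eqToHom h₁ ≫ L.α A B E ≫ eqToHom h₂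

/-- `h` is a component of the inverse associator `α⁻¹`. -/
def IsAlphaInvComp (L : LD C) {W T : C} (h : W ⟶ T) : Prop :=
  ∃ (A B E : C) (h₁ : W = L.ot (L.ot A B) E) (h₂ : L.ot A (L.ot B E) = T),
    h = eqToHom h₁ ≫ L.αInv A B E ≫ eqToHom h₂

/-- `h` is a component of the associator `ᾱ`. -/
def IsPalphaComp (L : LD C) {W T : C} (h : W ⟶ T) : Prop :=
  ∃ (A B E : C) (h₁ : W = L.pa A (L.pa B E)) (h₂ : L.pa (L.pa A B) E = T),
    h = eqToHom h₁ ≫ L.pα A B E ≫ eqToHom h₂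

/-- `h` is a component of the inverse associator `ᾱ⁻¹`. -/
def IsPalphaInvComp (L : LD C) {W T : C} (h : W ⟶ T) : Prop :=
  ∃ (A B E : C) (h₁ : W = L.pa (L.pa A B) E) (h₂ : L.pa A (L.pa B E) = T),
    h = eqToHom h₁ ≫ L.pαInv A B E ≫ eqToHom h₂

/-- `h` is a component of the left distributor `δˡ`. -/
def IsDlComp (L : LD C) {W T : C} (h : W ⟶ T) : Prop :=
  ∃ (A B E : C) (h₁ : W = L.ot A (L.pa B E)) (h₂ : L.pa (L.ot A B) E = T),
    h = eqToHom h₁ ≫ L.δl A B E ≫ eqToHom h₂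

/-- `h` is a component of the right distributor `δʳ`. -/
def IsDrComp (L : LD C) {W T : C} (h : W ⟶ T) : Prop :=
  ∃ (A B E : C) (h₁ : W = L.ot (L.pa A B) E) (h₂ : L.pa A (L.ot B E) = T),
    h = eqToHom h₁ ≫ L.δr A B E ≫ eqToHom h₂

/-- `h` is of the form `id_A ⅋ h'` for some morphism `h'`. -/
def IsIdPaLeft (L : LD C) {W T : C} (h : W ⟶ T) : Prop :=
  ∃ (A W' T' : C) (h' : W' ⟶ T') (h₁ : W = L.pa A W') (h₂ : L.pa A T' = T),
    h = eqToHom h₁ ≫ L.paHom (𝟙 A) h' ≫ eqToHom h₂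

/-- `h` is of the form `h' ⅋ id_A` for some morphism `h'`. -/
def IsIdPaRight (L : LD C) {W T : C} (h : W ⟶ T) : Prop :=
  ∃ (A W' T' : C) (h' : W' ⟶ T') (h₁ : W = L.pa W' A) (h₂ : L.pa T' A = T),
    h = eqToHom h₁ ≫ L.paHom h' (𝟙 A) ≫ eqToHom h₂

/-- The set `Id^⊗` of identities of ⊗-products, as a set of morphisms into ⊗-products. -/
def IdOtSet (L : LD C) ⦃X Y Z : C⦄ (f : X ⟶ L.ot Y Z) : Prop :=
  ∃ hE : X = L.ot Y Z, f = eqToHom hE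

/-- The set `Id^⅋` of identities of ⅋-products, as a set of morphisms into ⅋-products. -/
def IdPaSet (L : LD C) ⦃X Y Z : C⦄ (f : X ⟶ L.pa Y Z) : Prop :=
  ∃ hE : X = L.pa Y Z, f = eqToHom hE

/-- `𝔣`-analysability for a set `𝔣` of morphisms whose targets are ⊗-products:
`g = (g' ⊗ g'') ∘ τ^f_u(Ā)` for some `f ∈ 𝔣`, word `u`, vector `Ā` and morphisms `g', g''`. -/
def OtAnalysable (L : LD C) (𝔣 : ∀ ⦃X Y Z : C⦄, (X ⟶ L.ot Y Z) → Prop)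
    {P T : C} (g : P ⟶ T) : Prop :=
  ∃ (X Y Z : C) (f : X ⟶ L.ot Y Z), 𝔣 f ∧
    ∃ (w : YW C) (Q₁ Q₂ : C) (g' : Lot L Y w ⟶ Q₁) (g'' : Rot L Z w ⟶ Q₂)
      (hP : P = Hot L X w) (hT : L.ot Q₁ Q₂ = T),
      g = eqToHom hP ≫ tau L f w ≫ L.otHom g' g'' ≫ eqToHom hT

/-- `𝔣`-analysability for a set `𝔣` of morphisms whose targets are ⅋-products:
`g = (g' ⅋ g'') ∘ κ^f_u(Ā)` for some `f ∈ 𝔣`, word `u`, vector `Ā` and morphisms `g', g''`. -/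
def PaAnalysable (L : LD C) (𝔣 : ∀ ⦃X Y Z : C⦄, (X ⟶ L.pa Y Z) → Prop)
    {P T : C} (g : P ⟶ T) : Prop :=
  ∃ (X Y Z : C) (f : X ⟶ L.pa Y Z), 𝔣 f ∧
    ∃ (w : ZW C) (Q₁ Q₂ : C) (g' : Lpa L Y w ⟶ Q₁) (g'' : Rpa L Z w ⟶ Q₂)
      (hP : P = Hpa L X w) (hT : L.pa Q₁ Q₂ = T),
      g = eqToHom hP ≫ kappa L f w ≫ L.paHom g' g'' ≫ eqToHom hT

/-- Atomic morphisms of a (tidy) LD category. -/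
inductive Atomic (L : LD C) : ∀ {W T : C}, (W ⟶ T) → Prop
  | alpha (A B E : C) : Atomic L (L.α A B E)
  | alphaInv (A B E : C) : Atomic L (L.αInv A B E)
  | palpha (A B E : C) : Atomic L (L.pα A B E)
  | palphaInv (A B E : C) : Atomic L (L.pαInv A B E)
  | dl (A B E : C) : Atomic L (L.δl A B E)
  | dr (A B E : C) : Atomic L (L.δr A B E)
  | otRightId {W T : C} (f : W ⟶ T) (A : C) : Atomic L f → Atomic L (L.otHom f (𝟙 A))
  | otLeftId {W T : C} (f : W ⟶ T) (A : C) : Atomic L f → Atomic L (L.otHom (𝟙 A) f)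
  | paRightId {W T : C} (f : W ⟶ T) (A : C) : Atomic L f → Atomic L (L.paHom f (𝟙 A))
  | paLeftId {W T : C} (f : W ⟶ T) (A : C) : Atomic L f → Atomic L (L.paHom (𝟙 A) f)

/-- Elementary morphisms: identities and finite composites of atomic morphisms. -/
inductive Elementary (L : LD C) : ∀ {W T : C}, (W ⟶ T) → Prop
  | id (X : C) : Elementary L (𝟙 X)
  | of {W T : C} {f : W ⟶ T} : Atomic L f → Elementary L f
  | comp {W T U : C} {f : W ⟶ T} {g : T ⟶ U} :
      Elementary L f → Elementary L g → Elementary L (f ≫ g)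

/-- A strict Frobenius linearly distributive functor between LD categories. -/
structure StrictLDFunctor (Cc : Type u₁) [Category.{v₁} Cc] (Dd : Type u₂) [Category.{v₂} Dd]
    (LC : LD Cc) (LDd : LD Dd) where
  toFunctor : Cc ⥤ Dd
  obj_ot : ∀ X Y : Cc, toFunctor.obj (LC.ot X Y) = LDd.ot (toFunctor.obj X) (toFunctor.obj Y)
  obj_pa : ∀ X Y : Cc, toFunctor.obj (LC.pa X Y) = LDd.pa (toFunctor.obj X) (toFunctor.obj Y)
  map_ot : ∀ {X₁ Y₁ X₂ Y₂ : Cc} (f : X₁ ⟶ Y₁) (g : X₂ ⟶ Y₂),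
    toFunctor.map (LC.otHom f g) =
      eqToHom (obj_ot X₁ X₂) ≫ LDd.otHom (toFunctor.map f) (toFunctor.map g) ≫
        eqToHom (obj_ot Y₁ Y₂).symm
  map_pa : ∀ {X₁ Y₁ X₂ Y₂ : Cc} (f : X₁ ⟶ Y₁) (g : X₂ ⟶ Y₂),
    toFunctor.map (LC.paHom f g) =
      eqToHom (obj_pa X₁ X₂) ≫ LDd.paHom (toFunctor.map f) (toFunctor.map g) ≫
        eqToHom (obj_pa Y₁ Y₂).symm
  map_α : ∀ A B E : Cc,
    toFunctor.map (LC.α A B E) =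
      eqToHom (by simp only [obj_ot]) ≫
        LDd.α (toFunctor.obj A) (toFunctor.obj B) (toFunctor.obj E) ≫
        eqToHom (by simp only [obj_ot])
  map_αInv : ∀ A B E : Cc,
    toFunctor.map (LC.αInv A B E) =
      eqToHom (by simp only [obj_ot]) ≫
        LDd.αInv (toFunctor.obj A) (toFunctor.obj B) (toFunctor.obj E) ≫
        eqToHom (by simp only [obj_ot])
  map_pα : ∀ A B E : Cc,
    toFunctor.map (LC.pα A B E) =
      eqToHom (by simp only [obj_pa]) ≫
        LDd.pα (toFunctor.obj A) (toFunctor.obj B) (toFunctor.obj E) ≫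
        eqToHom (by simp only [obj_pa])
  map_pαInv : ∀ A B E : Cc,
    toFunctor.map (LC.pαInv A B E) =
      eqToHom (by simp only [obj_pa]) ≫
        LDd.pαInv (toFunctor.obj A) (toFunctor.obj B) (toFunctor.obj E) ≫
        eqToHom (by simp only [obj_pa])
  map_δl : ∀ A B E : Cc,
    toFunctor.map (LC.δl A B E) =
      eqToHom (by simp only [obj_ot, obj_pa]) ≫
        LDd.δl (toFunctor.obj A) (toFunctor.obj B) (toFunctor.obj E) ≫
        eqToHom (by simp only [obj_ot, obj_pa])
  map_δr : ∀ A B E : Cc,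
    toFunctor.map (LC.δr A B E) =
      eqToHom (by simp only [obj_ot, obj_pa]) ≫
        LDd.δr (toFunctor.obj A) (toFunctor.obj B) (toFunctor.obj E) ≫
        eqToHom (by simp only [obj_ot, obj_pa])

/-- A (unitless) Frobenius linearly distributive functor between LD categories. -/
structure FrobLDFunctor (Cc : Type u₁) [Category.{v₁} Cc] (Dd : Type u₂) [Category.{v₂} Dd]
    (LC : LD Cc) (LDd : LD Dd) where
  toFunctor : Cc ⥤ Dd
  μ : ∀ X Y : Cc, LDd.ot (toFunctor.obj X) (toFunctor.obj Y) ⟶ toFunctor.obj (LC.ot X Y)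
  Δ : ∀ X Y : Cc, toFunctor.obj (LC.pa X Y) ⟶ LDd.pa (toFunctor.obj X) (toFunctor.obj Y)
  μ_natural : ∀ {X₁ Y₁ X₂ Y₂ : Cc} (f : X₁ ⟶ Y₁) (g : X₂ ⟶ Y₂),
    LDd.otHom (toFunctor.map f) (toFunctor.map g) ≫ μ Y₁ Y₂ =
      μ X₁ X₂ ≫ toFunctor.map (LC.otHom f g)
  Δ_natural : ∀ {X₁ Y₁ X₂ Y₂ : Cc} (f : X₁ ⟶ Y₁) (g : X₂ ⟶ Y₂),
    toFunctor.map (LC.paHom f g) ≫ Δ Y₁ Y₂ =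
      Δ X₁ X₂ ≫ LDd.paHom (toFunctor.map f) (toFunctor.map g)
  H1 : ∀ A B E : Cc,
    LDd.α (toFunctor.obj A) (toFunctor.obj B) (toFunctor.obj E) ≫
        LDd.otHom (μ A B) (𝟙 (toFunctor.obj E)) ≫ μ (LC.ot A B) E =
      LDd.otHom (𝟙 (toFunctor.obj A)) (μ B E) ≫ μ A (LC.ot B E) ≫ toFunctor.map (LC.α A B E)
  H2 : ∀ A B E : Cc,
    LDd.otHom (𝟙 (toFunctor.obj A)) (Δ B E) ≫
        LDd.δl (toFunctor.obj A) (toFunctor.obj B) (toFunctor.obj E) ≫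
        LDd.paHom (μ A B) (𝟙 (toFunctor.obj E)) =
      μ A (LC.pa B E) ≫ toFunctor.map (LC.δl A B E) ≫ Δ (LC.ot A B) E
  H3 : ∀ A B E : Cc,
    LDd.otHom (Δ A B) (𝟙 (toFunctor.obj E)) ≫
        LDd.δr (toFunctor.obj A) (toFunctor.obj B) (toFunctor.obj E) ≫
        LDd.paHom (𝟙 (toFunctor.obj A)) (μ B E) =
      μ (LC.pa A B) E ≫ toFunctor.map (LC.δr A B E) ≫ Δ A (LC.ot B E)
  H4 : ∀ A B E : Cc,
    Δ A (LC.pa B E) ≫ LDd.paHom (𝟙 (toFunctor.obj A)) (Δ B E) ≫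
        LDd.pα (toFunctor.obj A) (toFunctor.obj B) (toFunctor.obj E) =
      toFunctor.map (LC.pα A B E) ≫ Δ (LC.pa A B) E ≫
        LDd.paHom (Δ A B) (𝟙 (toFunctor.obj E))

variable {Cc : Type u₁} [Category.{v₁} Cc] {Dd : Type u₂} [Category.{v₂} Dd]
  {LC : LD Cc} {LDd : LD Dd}

/-- Tidiness of a Frobenius LD functor: the image of an object is never a tensor product. -/
def FrobLDFunctor.TidyF (F : FrobLDFunctor Cc Dd LC LDd) : Prop :=
  ∀ (A : Cc) (P Q : Dd),
    F.toFunctor.obj A ≠ LDd.ot P Q ∧ F.toFunctor.obj A ≠ LDd.pa P Q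

/-- Multiplicative morphisms of the target category of a Frobenius LD functor. -/
inductive Multiplicative (F : FrobLDFunctor Cc Dd LC LDd) : ∀ {W T : Dd}, (W ⟶ T) → Prop
  | id (X : Cc) : Multiplicative F (𝟙 (F.toFunctor.obj X))
  | mu {W₁ W₂ : Dd} {X Y : Cc} (f : W₁ ⟶ F.toFunctor.obj X) (g : W₂ ⟶ F.toFunctor.obj Y) :
      Multiplicative F f → Multiplicative F g →
      Multiplicative F (LDd.otHom f g ≫ F.μ X Y)

/-- `F`-atomic morphisms of the target category of a Frobenius LD functor. -/
inductive FAtomic (F : FrobLDFunctor Cc Dd LC LDd) : ∀ {W T : Dd}, (W ⟶ T) → Prop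
  | alpha (A B E : Dd) : FAtomic F (LDd.α A B E)
  | alphaInv (A B E : Dd) : FAtomic F (LDd.αInv A B E)
  | palpha (A B E : Dd) : FAtomic F (LDd.pα A B E)
  | palphaInv (A B E : Dd) : FAtomic F (LDd.pαInv A B E)
  | dl (A B E : Dd) : FAtomic F (LDd.δl A B E)
  | dr (A B E : Dd) : FAtomic F (LDd.δr A B E)
  | mu (X Y : Cc) : FAtomic F (F.μ X Y)
  | delta (X Y : Cc) : FAtomic F (F.Δ X Y)
  | map {X Y : Cc} (f : X ⟶ Y) : Elementary LC f → FAtomic F (F.toFunctor.map f)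
  | otRightId {W T : Dd} (f : W ⟶ T) (A : Dd) : FAtomic F f → FAtomic F (LDd.otHom f (𝟙 A))
  | otLeftId {W T : Dd} (f : W ⟶ T) (A : Dd) : FAtomic F f → FAtomic F (LDd.otHom (𝟙 A) f)
  | paRightId {W T : Dd} (f : W ⟶ T) (A : Dd) : FAtomic F f → FAtomic F (LDd.paHom f (𝟙 A))
  | paLeftId {W T : Dd} (f : W ⟶ T) (A : Dd) : FAtomic F f → FAtomic F (LDd.paHom (𝟙 A) f)

/-- `F`-elementary morphisms: identities and finite composites of `F`-atomic morphisms. -/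
inductive FElementary (F : FrobLDFunctor Cc Dd LC LDd) : ∀ {W T : Dd}, (W ⟶ T) → Prop
  | id (X : Dd) : FElementary F (𝟙 X)
  | of {W T : Dd} {f : W ⟶ T} : FAtomic F f → FElementary F f
  | comp {W T U : Dd} {f : W ⟶ T} {g : T ⟶ U} :
      FElementary F f → FElementary F g → FElementary F (f ≫ g)

/-- The set `𝔡` of morphisms of the form `Δ ∘ F(κ^i_u(X̄))`, where `i` is the identity of a
⅋-product of the source category. -/
def frakD (F : FrobLDFunctor Cc Dd LC LDd) ⦃P Q₁ Q₂ : Dd⦄ (g : P ⟶ LDd.pa Q₁ Q₂) : Prop :=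
  ∃ (Y Z : Cc) (w : ZW Cc) (hP : P = F.toFunctor.obj (Hpa LC (LC.pa Y Z) w))
    (h₁ : F.toFunctor.obj (Lpa LC Y w) = Q₁) (h₂ : F.toFunctor.obj (Rpa LC Z w) = Q₂),
    g = eqToHom hP ≫ F.toFunctor.map (kappa LC (𝟙 (LC.pa Y Z)) w) ≫
        F.Δ (Lpa LC Y w) (Rpa LC Z w) ≫ eqToHom (by rw [h₁, h₂])

section Helpers

variable {C : Type u} [Category.{v} C]

lemma LD.isIso_α (L : LD C) (A B E : C) : IsIso (L.α A B E) :=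
  ⟨L.αInv A B E, L.α_αInv A B E, L.αInv_α A B E⟩

lemma LD.isIso_αInv (L : LD C) (A B E : C) : IsIso (L.αInv A B E) :=
  ⟨L.α A B E, L.αInv_α A B E, L.α_αInv A B E⟩

lemma LD.isIso_otHom (L : LD C) {X Y X' Y' : C} (f : X ⟶ Y) (g : X' ⟶ Y')
    (hf : IsIso f) (hg : IsIso g) : IsIso (L.otHom f g) := by
  obtain ⟨f', hf1, hf2⟩ := hf.out
  obtain ⟨g', hg1, hg2⟩ := hg.out
  exact ⟨L.otHom f' g', by rw [← L.otHom_comp, hf1, hg1, L.otHom_id],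
    by rw [← L.otHom_comp, hf2, hg2, L.otHom_id]⟩

lemma LD.otHom_id_comp' (L : LD C) {A X Y Z : C} (f : X ⟶ Y) (g : Y ⟶ Z) :
    L.otHom (𝟙 A) (f ≫ g) = L.otHom (𝟙 A) f ≫ L.otHom (𝟙 A) g := by
  rw [← L.otHom_comp, Category.id_comp]

lemma LD.otHom_comp_id' (L : LD C) {A X Y Z : C} (f : X ⟶ Y) (g : Y ⟶ Z) :
    L.otHom (f ≫ g) (𝟙 A) = L.otHom f (𝟙 A) ≫ L.otHom g (𝟙 A) := by
  rw [← L.otHom_comp, Category.id_comp]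

lemma LD.α_αInv_assoc (L : LD C) (A B E : C) {T : C} (k : L.ot A (L.ot B E) ⟶ T) :
    L.α A B E ≫ L.αInv A B E ≫ k = k := by
  rw [← Category.assoc, L.α_αInv, Category.id_comp]

lemma LD.αInv_α_assoc (L : LD C) (A B E : C) {T : C} (k : L.ot (L.ot A B) E ⟶ T) :
    L.αInv A B E ≫ L.α A B E ≫ k = k := by
  rw [← Category.assoc, L.αInv_α, Category.id_comp]

lemma LD.otR_cancel (L : LD C) {X Y : C} {f : X ⟶ Y} {g : Y ⟶ X} (hfg : f ≫ g = 𝟙 X)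
    (D : C) : L.otHom f (𝟙 D) ≫ L.otHom g (𝟙 D) = 𝟙 (L.ot X D) := by
  rw [← L.otHom_comp, hfg, Category.id_comp, L.otHom_id]

lemma LD.otR_cancel_assoc (L : LD C) {X Y : C} {f : X ⟶ Y} {g : Y ⟶ X} (hfg : f ≫ g = 𝟙 X)
    (D : C) {T : C} (k : L.ot X D ⟶ T) :
    L.otHom f (𝟙 D) ≫ L.otHom g (𝟙 D) ≫ k = k := by
  rw [← Category.assoc, L.otR_cancel hfg, Category.id_comp]

lemma LD.otL_cancel (L : LD C) {X Y : C} {f : X ⟶ Y} {g : Y ⟶ X} (hfg : f ≫ g = 𝟙 X)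
    (D : C) : L.otHom (𝟙 D) f ≫ L.otHom (𝟙 D) g = 𝟙 (L.ot D X) := by
  rw [← L.otHom_comp, hfg, Category.id_comp, L.otHom_id]

lemma LD.otL_cancel_assoc (L : LD C) {X Y : C} {f : X ⟶ Y} {g : Y ⟶ X} (hfg : f ≫ g = 𝟙 X)
    (D : C) {T : C} (k : L.ot D X ⟶ T) :
    L.otHom (𝟙 D) f ≫ L.otHom (𝟙 D) g ≫ k = k := by
  rw [← Category.assoc, L.otL_cancel hfg, Category.id_comp]

lemma LD.αInv_natural (L : LD C) {A A' B B' E E' : C} (f : A ⟶ A') (g : B ⟶ B') (h : E ⟶ E') :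
    L.otHom (L.otHom f g) h ≫ L.αInv A' B' E' = L.αInv A B E ≫ L.otHom f (L.otHom g h) := by
  haveI := L.isIso_α A B E
  rw [← cancel_epi (L.α A B E), L.α_αInv_assoc,
    ← reassoc_of% (L.α_natural f g h), L.α_αInv, Category.comp_id]

end Helpers

section Pentagons

variable {C : Type u} [Category.{v} C]

lemma LD.V1 (L : LD C) (A B E D : C) :
    L.α A (L.ot B E) D ≫ L.otHom (L.α A B E) (𝟙 D) ≫ L.αInv (L.ot A B) E D =
      L.otHom (𝟙 A) (L.αInv B E D) ≫ L.α A B (L.ot E D) := by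
  haveI := L.isIso_otHom (𝟙 A) (L.α B E D) inferInstance (L.isIso_α B E D)
  rw [← cancel_epi (L.otHom (𝟙 A) (L.α B E D)), ← reassoc_of% (L.P1 A B E D),
    L.α_αInv, Category.comp_id, L.otL_cancel_assoc (L.α_αInv B E D)]

lemma LD.V2 (L : LD C) (A B E D : C) :
    L.α (L.ot A B) E D ≫ L.otHom (L.αInv A B E) (𝟙 D) ≫ L.αInv A (L.ot B E) D =
      L.αInv A B (L.ot E D) ≫ L.otHom (𝟙 A) (L.α B E D) := by
  haveI := L.isIso_α A B (L.ot E D)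
  rw [← cancel_epi (L.α A B (L.ot E D)), reassoc_of% (L.P1 A B E D),
    L.otR_cancel_assoc (L.α_αInv A B E), L.α_αInv, Category.comp_id, L.α_αInv_assoc]

lemma LD.V4 (L : LD C) (A B E D : C) :
    L.αInv A B (L.ot E D) ≫ L.otHom (𝟙 A) (L.α B E D) ≫ L.α A (L.ot B E) D =
      L.α (L.ot A B) E D ≫ L.otHom (L.αInv A B E) (𝟙 D) := by
  haveI := L.isIso_α A B (L.ot E D)
  rw [← cancel_epi (L.α A B (L.ot E D)), L.α_αInv_assoc, reassoc_of% (L.P1 A B E D),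
    L.otR_cancel (L.α_αInv A B E), Category.comp_id]

lemma LD.V5 (L : LD C) (A B E D : C) :
    L.αInv A (L.ot B E) D ≫ L.otHom (𝟙 A) (L.αInv B E D) ≫ L.α A B (L.ot E D) =
      L.otHom (L.α A B E) (𝟙 D) ≫ L.αInv (L.ot A B) E D := by
  haveI := L.isIso_α A (L.ot B E) D
  rw [← cancel_epi (L.α A (L.ot B E) D), L.α_αInv_assoc, ← L.V1 A B E D]

lemma LD.V6 (L : LD C) (A B E D : C) :
    L.αInv (L.ot A B) E D ≫ L.αInv A B (L.ot E D) =
      L.otHom (L.αInv A B E) (𝟙 D) ≫ L.αInv A (L.ot B E) D ≫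
        L.otHom (𝟙 A) (L.αInv B E D) := by
  haveI := L.isIso_α (L.ot A B) E D
  rw [← cancel_epi (L.α (L.ot A B) E D), L.α_αInv_assoc, reassoc_of% (L.V2 A B E D),
    L.otL_cancel (L.α_αInv B E D), Category.comp_id]

end Pentagons

section EquationLemmas

variable {C : Type u} [Category.{v} C]

lemma LD.EA (L : LD C) (A B H Lw Rw : C) (t : H ⟶ L.ot Lw Rw) :
    L.α A B H ≫ L.otHom (𝟙 (L.ot A B)) t ≫ L.α (L.ot A B) Lw Rw =
      L.otHom (𝟙 A) (L.otHom (𝟙 B) t ≫ L.α B Lw Rw) ≫ L.α A (L.ot B Lw) Rw ≫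
        L.otHom (L.α A B Lw) (𝟙 Rw) := by
  have nat : L.α A B H ≫ L.otHom (𝟙 (L.ot A B)) t =
      L.otHom (𝟙 A) (L.otHom (𝟙 B) t) ≫ L.α A B (L.ot Lw Rw) := by
    have := L.α_natural (𝟙 A) (𝟙 B) t
    rw [L.otHom_id] at this
    exact this.symm
  rw [L.otHom_id_comp', Category.assoc, reassoc_of% nat, L.P1 A B Lw Rw]

lemma LD.EB (L : LD C) (A A₁ H Lw Rw : C) (t : H ⟶ L.ot Lw Rw) :
    L.α A H A₁ ≫ L.otHom (L.otHom (𝟙 A) t ≫ L.α A Lw Rw) (𝟙 A₁) ≫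
        L.αInv (L.ot A Lw) Rw A₁ =
      L.otHom (𝟙 A) (L.otHom t (𝟙 A₁) ≫ L.αInv Lw Rw A₁) ≫ L.α A Lw (L.ot Rw A₁) := by
  have nat : L.α A H A₁ ≫ L.otHom (L.otHom (𝟙 A) t) (𝟙 A₁) =
      L.otHom (𝟙 A) (L.otHom t (𝟙 A₁)) ≫ L.α A (L.ot Lw Rw) A₁ :=
    (L.α_natural (𝟙 A) t (𝟙 A₁)).symm
  rw [L.otHom_comp_id', L.otHom_id_comp', Category.assoc, Category.assoc,
    reassoc_of% nat, L.V1 A Lw Rw A₁]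

lemma LD.EC (L : LD C) (A₂ A₁ H Lw Rw : C) (t : H ⟶ L.ot Lw Rw) :
    L.α H A₂ A₁ ≫ L.otHom (L.otHom t (𝟙 A₂) ≫ L.αInv Lw Rw A₂) (𝟙 A₁) ≫
        L.αInv Lw (L.ot Rw A₂) A₁ =
      L.otHom t (𝟙 (L.ot A₂ A₁)) ≫ L.αInv Lw Rw (L.ot A₂ A₁) ≫
        L.otHom (𝟙 Lw) (L.α Rw A₂ A₁) := by
  have nat : L.α H A₂ A₁ ≫ L.otHom (L.otHom t (𝟙 A₂)) (𝟙 A₁) =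
      L.otHom t (𝟙 (L.ot A₂ A₁)) ≫ L.α (L.ot Lw Rw) A₂ A₁ := by
    have := L.α_natural t (𝟙 A₂) (𝟙 A₁)
    rw [L.otHom_id] at this
    exact this.symm
  rw [L.otHom_comp_id', Category.assoc, reassoc_of% nat, L.V2 Lw Rw A₂ A₁]

lemma LD.ED1 (L : LD C) (A B H Lw Rw : C) (t : H ⟶ L.ot Lw Rw) :
    L.αInv A B H ≫ L.otHom (𝟙 A) (L.otHom (𝟙 B) t ≫ L.α B Lw Rw) ≫
        L.α A (L.ot B Lw) Rw =
      L.otHom (𝟙 (L.ot A B)) t ≫ L.α (L.ot A B) Lw Rw ≫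
        L.otHom (L.αInv A B Lw) (𝟙 Rw) := by
  have nat : L.αInv A B H ≫ L.otHom (𝟙 A) (L.otHom (𝟙 B) t) =
      L.otHom (𝟙 (L.ot A B)) t ≫ L.αInv A B (L.ot Lw Rw) := by
    have := L.αInv_natural (𝟙 A) (𝟙 B) t
    rw [L.otHom_id] at this
    exact this.symm
  rw [L.otHom_id_comp', Category.assoc, reassoc_of% nat, L.V4 A B Lw Rw]

lemma LD.ED2 (L : LD C) (A A₂ H Lw Rw : C) (t : H ⟶ L.ot Lw Rw) :
    L.αInv A H A₂ ≫ L.otHom (𝟙 A) (L.otHom t (𝟙 A₂) ≫ L.αInv Lw Rw A₂) ≫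
        L.α A Lw (L.ot Rw A₂) =
      L.otHom (L.otHom (𝟙 A) t ≫ L.α A Lw Rw) (𝟙 A₂) ≫ L.αInv (L.ot A Lw) Rw A₂ := by
  have nat : L.αInv A H A₂ ≫ L.otHom (𝟙 A) (L.otHom t (𝟙 A₂)) =
      L.otHom (L.otHom (𝟙 A) t) (𝟙 A₂) ≫ L.αInv A (L.ot Lw Rw) A₂ :=
    (L.αInv_natural (𝟙 A) t (𝟙 A₂)).symm
  rw [L.otHom_id_comp', L.otHom_comp_id', Category.assoc, Category.assoc,
    reassoc_of% nat, L.V5 A Lw Rw A₂]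

lemma LD.ED3 (L : LD C) (B E H Lw Rw : C) (t : H ⟶ L.ot Lw Rw) :
    L.αInv H B E ≫ L.otHom t (𝟙 (L.ot B E)) ≫ L.αInv Lw Rw (L.ot B E) =
      L.otHom (L.otHom t (𝟙 B) ≫ L.αInv Lw Rw B) (𝟙 E) ≫ L.αInv Lw (L.ot Rw B) E ≫
        L.otHom (𝟙 Lw) (L.αInv Rw B E) := by
  have nat : L.αInv H B E ≫ L.otHom t (𝟙 (L.ot B E)) =
      L.otHom (L.otHom t (𝟙 B)) (𝟙 E) ≫ L.αInv (L.ot Lw Rw) B E := by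
    have := L.αInv_natural t (𝟙 B) (𝟙 E)
    rw [L.otHom_id] at this
    exact this.symm
  rw [L.otHom_comp_id', Category.assoc, reassoc_of% nat, L.V6 Lw Rw B E]

lemma LD.EIV (L : LD C) {H₁ L₁ R₁ H₂ L₂ R₂ : C} (A : C) (t₁ : H₁ ⟶ L.ot L₁ R₁)
    (t₂ : H₂ ⟶ L.ot L₂ R₂) (h' : H₂ ⟶ H₁) (g' : L₂ ⟶ L₁) (g'' : R₂ ⟶ R₁)
    (fact : h' ≫ t₁ = t₂ ≫ L.otHom g' g'') :
    L.otHom (𝟙 A) h' ≫ L.otHom (𝟙 A) t₁ ≫ L.α A L₁ R₁ =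
      L.otHom (𝟙 A) t₂ ≫ L.α A L₂ R₂ ≫ L.otHom (L.otHom (𝟙 A) g') g'' := by
  have merge : L.otHom (𝟙 A) h' ≫ L.otHom (𝟙 A) t₁ =
      L.otHom (𝟙 A) t₂ ≫ L.otHom (𝟙 A) (L.otHom g' g'') := by
    rw [← L.otHom_id_comp', ← L.otHom_id_comp', fact]
  rw [← Category.assoc, merge, Category.assoc, L.α_natural (𝟙 A) g' g'']

lemma LD.EV (L : LD C) {H₁ L₁ R₁ H₂ L₂ R₂ : C} (A : C) (t₁ : H₁ ⟶ L.ot L₁ R₁)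
    (t₂ : H₂ ⟶ L.ot L₂ R₂) (h' : H₂ ⟶ H₁) (g' : L₂ ⟶ L₁) (g'' : R₂ ⟶ R₁)
    (fact : h' ≫ t₁ = t₂ ≫ L.otHom g' g'') :
    L.otHom h' (𝟙 A) ≫ L.otHom t₁ (𝟙 A) ≫ L.αInv L₁ R₁ A =
      L.otHom t₂ (𝟙 A) ≫ L.αInv L₂ R₂ A ≫ L.otHom g' (L.otHom g'' (𝟙 A)) := by
  have merge : L.otHom h' (𝟙 A) ≫ L.otHom t₁ (𝟙 A) =
      L.otHom t₂ (𝟙 A) ≫ L.otHom (L.otHom g' g'') (𝟙 A) := by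
    rw [← L.otHom_comp_id', ← L.otHom_comp_id', fact]
  rw [← Category.assoc, merge, Category.assoc, L.αInv_natural g' g'' (𝟙 A)]

lemma LD.EIVb (L : LD C) {H Lw Rw W' T' : C} (t : H ⟶ L.ot Lw Rw) (h' : W' ⟶ T') :
    L.otHom (𝟙 H) h' ≫ L.otHom t (𝟙 T') ≫ L.αInv Lw Rw T' =
      L.otHom t (𝟙 W') ≫ L.αInv Lw Rw W' ≫ L.otHom (𝟙 Lw) (L.otHom (𝟙 Rw) h') := by
  have m1 : L.otHom (𝟙 H) h' ≫ L.otHom t (𝟙 T') = L.otHom t h' := by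
    rw [← L.otHom_comp, Category.id_comp, Category.comp_id]
  have m2 : L.otHom t (𝟙 W') ≫ L.otHom (L.otHom (𝟙 Lw) (𝟙 Rw)) h' = L.otHom t h' := by
    rw [← L.otHom_comp, L.otHom_id, Category.comp_id, Category.id_comp]
  rw [← Category.assoc, m1, ← m2, Category.assoc, L.αInv_natural (𝟙 Lw) (𝟙 Rw) h']

lemma LD.EVb (L : LD C) {H Lw Rw W' T' : C} (t : H ⟶ L.ot Lw Rw) (h' : W' ⟶ T') :
    L.otHom h' (𝟙 H) ≫ L.otHom (𝟙 T') t ≫ L.α T' Lw Rw =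
      L.otHom (𝟙 W') t ≫ L.α W' Lw Rw ≫ L.otHom (L.otHom h' (𝟙 Lw)) (𝟙 Rw) := by
  have m1 : L.otHom h' (𝟙 H) ≫ L.otHom (𝟙 T') t = L.otHom h' t := by
    rw [← L.otHom_comp, Category.id_comp, Category.comp_id]
  have m2 : L.otHom (𝟙 W') t ≫ L.otHom h' (L.otHom (𝟙 Lw) (𝟙 Rw)) = L.otHom h' t := by
    rw [← L.otHom_comp, L.otHom_id, Category.comp_id, Category.id_comp]
  rw [← Category.assoc, m1, ← m2, Category.assoc, L.α_natural h' (𝟙 Lw) (𝟙 Rw)]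

end EquationLemmas


/-- Analysis of morphisms `h` into `H^f_u(Ā)` whose composite with `τ^f_u(Ā)` is not
`𝔣`-analysable (Lemma 3.5 of the paper). -/
theorem tau_not_analysable_analysis {C : Type u} [Category.{v} C] (L : LD C) (hTidy : L.Tidy)
    (𝔣 : ∀ ⦃X Y Z : C⦄, (X ⟶ L.ot Y Z) → Prop)
    (w : YW C) (hw : w ≠ YW.nil)
    {X Y Z : C} (f : X ⟶ L.ot Y Z) (hf : 𝔣 f)
    {W : C} (h : W ⟶ Hot L X w)
    (hna : ¬ OtAnalysable L 𝔣 (h ≫ tau L f w)) :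
    (¬ IsDlComp L h ∧ ¬ IsDrComp L h ∧ ¬ IsPalphaComp L h ∧ ¬ IsPalphaInvComp L h ∧
      ¬ IsIdPaLeft L h ∧ ¬ IsIdPaRight L h) ∧
    (IsAlphaComp L h → ∃ A : C, w = YW.ainv A YW.nil) ∧
    (IsAlphaInvComp L h → ∃ A : C, w = YW.a A YW.nil) ∧
    (∀ (A W' T' : C) (h' : W' ⟶ T') (h₁ : W = L.ot A W') (h₂ : L.ot A T' = Hot L X w),
      h = eqToHom h₁ ≫ L.otHom (𝟙 A) h' ≫ eqToHom h₂ →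
      ∃ w₁ : YW C, w = YW.a A w₁ ∧
        ∃ hT : T' = Hot L X w₁,
          ¬ OtAnalysable L 𝔣 (h' ≫ eqToHom hT ≫ tau L f w₁)) ∧
    (∀ (A W' T' : C) (h' : W' ⟶ T') (h₁ : W = L.ot W' A) (h₂ : L.ot T' A = Hot L X w),
      h = eqToHom h₁ ≫ L.otHom h' (𝟙 A) ≫ eqToHom h₂ →
      ∃ w₁ : YW C, w = YW.ainv A w₁ ∧
        ∃ hT : T' = Hot L X w₁,
          ¬ OtAnalysable L 𝔣 (h' ≫ eqToHom hT ≫ tau L f w₁)) := by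
  obtain ⟨P, Q, hPQ⟩ : ∃ P Q : C, Hot L X w = L.ot P Q := by
    cases w with
    | nil => exact absurd rfl hw
    | a A w' => exact ⟨A, Hot L X w', rfl⟩
    | ainv A w' => exact ⟨Hot L X w', A, rfl⟩
  refine ⟨⟨?_, ?_, ?_, ?_, ?_, ?_⟩, ?_, ?_, ?_, ?_⟩
  · rintro ⟨A, B, E, h₁, h₂, -⟩
    rw [hPQ] at h₂
    exact hTidy.2.2 _ _ _ _ h₂.symm
  · rintro ⟨A, B, E, h₁, h₂, -⟩
    rw [hPQ] at h₂
    exact hTidy.2.2 _ _ _ _ h₂.symm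
  · rintro ⟨A, B, E, h₁, h₂, -⟩
    rw [hPQ] at h₂
    exact hTidy.2.2 _ _ _ _ h₂.symm
  · rintro ⟨A, B, E, h₁, h₂, -⟩
    rw [hPQ] at h₂
    exact hTidy.2.2 _ _ _ _ h₂.symm
  · rintro ⟨A, W', T', h', h₁, h₂, -⟩
    rw [hPQ] at h₂
    exact hTidy.2.2 _ _ _ _ h₂.symm
  · rintro ⟨A, W', T', h', h₁, h₂, -⟩
    rw [hPQ] at h₂
    exact hTidy.2.2 _ _ _ _ h₂.symm
  -- (ii): components of α
  · rintro ⟨A, B, E, rfl, h₂, rfl⟩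
    cases w with
    | nil => exact absurd rfl hw
    | a A₁ w₁ =>
      exfalso
      obtain ⟨e1, e2⟩ := hTidy.1 (L.ot A B) E A₁ (Hot L X w₁) h₂
      subst e1; subst e2
      exact hna ⟨X, Y, Z, f, hf, YW.a A (YW.a B w₁), _, _, L.α A B (Lot L Y w₁),
        𝟙 (Rot L Z w₁), rfl, rfl, by
          simp only [tau, Hot, Lot, Rot, eqToHom_refl, Category.id_comp, Category.comp_id,
            Category.assoc, L.otHom_id]
          erw [eqToHom_refl, Category.id_comp]
          exact L.EA A B (Hot L X w₁) (Lot L Y w₁) (Rot L Z w₁) (tau L f w₁)⟩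
    | ainv A₁ w₁ =>
      cases w₁ with
      | nil => exact ⟨A₁, rfl⟩
      | a A₂ w₂ =>
        exfalso
        obtain ⟨e1, e2⟩ := hTidy.1 (L.ot A B) E (Hot L X (YW.a A₂ w₂)) A₁ h₂
        obtain ⟨e3, e4⟩ := hTidy.1 A B A₂ (Hot L X w₂) e1
        subst e3; subst e4; subst e2
        exact hna ⟨X, Y, Z, f, hf, YW.a A (YW.ainv E w₂), _, _, 𝟙 (L.ot A (Lot L Y w₂)),
          𝟙 (L.ot (Rot L Z w₂) E), rfl, rfl, by
            simp only [tau, Hot, Lot, Rot, eqToHom_refl, Category.id_comp, Category.comp_id,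
              Category.assoc, L.otHom_id]
            erw [eqToHom_refl, Category.id_comp]
            exact L.EB A E (Hot L X w₂) (Lot L Y w₂) (Rot L Z w₂) (tau L f w₂)⟩
      | ainv A₂ w₂ =>
        exfalso
        obtain ⟨e1, e2⟩ := hTidy.1 (L.ot A B) E (Hot L X (YW.ainv A₂ w₂)) A₁ h₂
        obtain ⟨e3, e4⟩ := hTidy.1 A B (Hot L X w₂) A₂ e1
        subst e3; subst e4; subst e2
        exact hna ⟨X, Y, Z, f, hf, YW.ainv (L.ot B E) w₂, _, _, 𝟙 (Lot L Y w₂),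
          L.α (Rot L Z w₂) B E, rfl, rfl, by
            simp only [tau, Hot, Lot, Rot, eqToHom_refl, Category.id_comp, Category.comp_id,
              Category.assoc, L.otHom_id]
            erw [eqToHom_refl, Category.id_comp]
            exact L.EC B E (Hot L X w₂) (Lot L Y w₂) (Rot L Z w₂) (tau L f w₂)⟩
  -- (iii): components of αInv
  · rintro ⟨A, B, E, rfl, h₂, rfl⟩
    cases w with
    | nil => exact absurd rfl hw
    | a A₁ w₁ =>
      cases w₁ with
      | nil => exact ⟨A₁, rfl⟩
      | a A₂ w₂ =>
        exfalso
        obtain ⟨e1, e2⟩ := hTidy.1 A (L.ot B E) A₁ (Hot L X (YW.a A₂ w₂)) h₂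
        obtain ⟨e3, e4⟩ := hTidy.1 B E A₂ (Hot L X w₂) e2
        subst e1; subst e3; subst e4
        exact hna ⟨X, Y, Z, f, hf, YW.a (L.ot A B) w₂, _, _, L.αInv A B (Lot L Y w₂),
          𝟙 (Rot L Z w₂), rfl, rfl, by
            simp only [tau, Hot, Lot, Rot, eqToHom_refl, Category.id_comp, Category.comp_id,
              Category.assoc, L.otHom_id]
            erw [eqToHom_refl, Category.id_comp]
            exact L.ED1 A B (Hot L X w₂) (Lot L Y w₂) (Rot L Z w₂) (tau L f w₂)⟩
      | ainv A₂ w₂ =>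
        exfalso
        obtain ⟨e1, e2⟩ := hTidy.1 A (L.ot B E) A₁ (Hot L X (YW.ainv A₂ w₂)) h₂
        obtain ⟨e3, e4⟩ := hTidy.1 B E (Hot L X w₂) A₂ e2
        subst e1; subst e3; subst e4
        exact hna ⟨X, Y, Z, f, hf, YW.ainv E (YW.a A w₂), _, _, 𝟙 (L.ot A (Lot L Y w₂)),
          𝟙 (L.ot (Rot L Z w₂) E), rfl, rfl, by
            simp only [tau, Hot, Lot, Rot, eqToHom_refl, Category.id_comp, Category.comp_id,
              Category.assoc, L.otHom_id]
            erw [eqToHom_refl, Category.id_comp]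
            exact L.ED2 A E (Hot L X w₂) (Lot L Y w₂) (Rot L Z w₂) (tau L f w₂)⟩
    | ainv A₁ w₁ =>
      exfalso
      obtain ⟨e1, e2⟩ := hTidy.1 A (L.ot B E) (Hot L X w₁) A₁ h₂
      subst e1; subst e2
      exact hna ⟨X, Y, Z, f, hf, YW.ainv E (YW.ainv B w₁), _, _, 𝟙 (Lot L Y w₁),
        L.αInv (Rot L Z w₁) B E, rfl, rfl, by
          simp only [tau, Hot, Lot, Rot, eqToHom_refl, Category.id_comp, Category.comp_id,
            Category.assoc, L.otHom_id]
          erw [eqToHom_refl, Category.id_comp]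
          exact L.ED3 B E (Hot L X w₁) (Lot L Y w₁) (Rot L Z w₁) (tau L f w₁)⟩
  -- (iv): h = id ⊗ h'
  · intro A W' T' h' h₁ h₂ heq
    subst h₁; subst heq
    cases w with
    | nil => exact absurd rfl hw
    | a A₁ w₁ =>
      obtain ⟨e1, e2⟩ := hTidy.1 A T' A₁ (Hot L X w₁) h₂
      subst e1; subst e2
      refine ⟨w₁, rfl, rfl, ?_⟩
      intro hana
      obtain ⟨X₀, Y₀, Z₀, f₀, hf₀, v, Q₁, Q₂, g', g'', hP, hT, heq'⟩ := hana
      obtain ⟨e3, e4⟩ := hTidy.1 Q₁ Q₂ (Lot L Y w₁) (Rot L Z w₁) hT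
      subst e3; subst e4; subst hP
      simp only [eqToHom_refl, Category.id_comp, Category.comp_id] at heq'
      exact hna ⟨X₀, Y₀, Z₀, f₀, hf₀, YW.a A v, _, _, L.otHom (𝟙 A) g', g'', rfl, rfl, by
        simp only [tau, Hot, Lot, Rot, eqToHom_refl, Category.id_comp, Category.comp_id,
          Category.assoc]
        erw [eqToHom_refl, Category.id_comp]
        exact L.EIV A (tau L f w₁) (tau L f₀ v) h' g' g'' heq'⟩
    | ainv A₁ w₁ =>
      exfalso
      obtain ⟨e1, e2⟩ := hTidy.1 A T' (Hot L X w₁) A₁ h₂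
      subst e1; subst e2
      exact hna ⟨X, Y, Z, f, hf, YW.ainv W' w₁, _, _, 𝟙 (Lot L Y w₁),
        L.otHom (𝟙 (Rot L Z w₁)) h', rfl, rfl, by
        simp only [tau, Hot, Lot, Rot, eqToHom_refl, Category.id_comp, Category.comp_id,
          Category.assoc]
        erw [eqToHom_refl, Category.id_comp]
        exact L.EIVb (tau L f w₁) h'⟩
  -- (v): h = h' ⊗ id
  · intro A W' T' h' h₁ h₂ heq
    subst h₁; subst heq
    cases w with
    | nil => exact absurd rfl hw
    | a A₁ w₁ =>
      exfalso
      obtain ⟨e1, e2⟩ := hTidy.1 T' A A₁ (Hot L X w₁) h₂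
      subst e1; subst e2
      exact hna ⟨X, Y, Z, f, hf, YW.a W' w₁, _, _, L.otHom h' (𝟙 (Lot L Y w₁)),
        𝟙 (Rot L Z w₁), rfl, rfl, by
        simp only [tau, Hot, Lot, Rot, eqToHom_refl, Category.id_comp, Category.comp_id,
          Category.assoc]
        erw [eqToHom_refl, Category.id_comp]
        exact L.EVb (tau L f w₁) h'⟩
    | ainv A₁ w₁ =>
      obtain ⟨e1, e2⟩ := hTidy.1 T' A (Hot L X w₁) A₁ h₂
      subst e1; subst e2
      refine ⟨w₁, rfl, rfl, ?_⟩
      intro hana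
      obtain ⟨X₀, Y₀, Z₀, f₀, hf₀, v, Q₁, Q₂, g', g'', hP, hT, heq'⟩ := hana
      obtain ⟨e3, e4⟩ := hTidy.1 Q₁ Q₂ (Lot L Y w₁) (Rot L Z w₁) hT
      subst e3; subst e4; subst hP
      simp only [eqToHom_refl, Category.id_comp, Category.comp_id] at heq'
      exact hna ⟨X₀, Y₀, Z₀, f₀, hf₀, YW.ainv A v, _, _, g', L.otHom g'' (𝟙 A), rfl, rfl, by
        simp only [tau, Hot, Lot, Rot, eqToHom_refl, Category.id_comp, Category.comp_id,
          Category.assoc]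
        erw [eqToHom_refl, Category.id_comp]
        exact L.EV A (tau L f w₁) (tau L f₀ v) h' g' g'' heq'⟩


end LDCoherence
end

section
/- In a tidy LD category C, for every morphism f : H → L⅋R into a ⅋-product, the family (κ^f_u)_{u∈𝔝} satisfies the following six relations, as equalities of composites of components for all words u ∈ 𝔝 and all vectors of objects (components of ᾱ, ᾱ⁻¹ and identities being the evident ones making both sides parallel): (1) κ^f_{ā·u}∘ᾱ = (ᾱ⅋id)∘κ^f_{ā·ā·u}; (2) κ^f_{ā⁻¹·ā·u}∘ᾱ = κ^f_{ā·ā⁻¹·u}; (3) κ^f_{ā⁻¹·ā⁻¹·u}∘ᾱ = (id⅋ᾱ)∘κ^f_{ā⁻¹·u}; (4) κ^f_{ā⁻¹·u}∘ᾱ⁻¹ = (id⅋ᾱ⁻¹)∘κ^f_{ā⁻¹·ā⁻¹·u}; (5) κ^f_{ā·ā⁻¹·u}∘ᾱ⁻¹ = κ^f_{ā⁻¹·ā·u}; (6) κ^f_{ā·ā·u}∘ᾱ⁻¹ = (ᾱ⁻¹⅋id)∘κ^f_{ā·u}. -/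
open CategoryTheory

namespace LDCoherence

universe v u v₁ u₁ v₂ u₂

variable {C : Type u} [Category.{v} C]

variable {Cc : Type u₁} [Category.{v₁} Cc] {Dd : Type u₂} [Category.{v₂} Dd]
  {LC : LD Cc} {LDd : LD Dd}

section Helpers

variable {C' : Type u} [Category.{v} C'] (L : LD C')

lemma pa_cancel_left (A B E : C') {T : C'} (h : L.pa A (L.pa B E) ⟶ T) :
    L.pα A B E ≫ L.pαInv A B E ≫ h = h := by
  rw [← Category.assoc, L.pα_pαInv, Category.id_comp]

lemma pa_cancel_left' (A B E : C') {T : C'} (h : L.pa (L.pa A B) E ⟶ T) :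
    L.pαInv A B E ≫ L.pα A B E ≫ h = h := by
  rw [← Category.assoc, L.pαInv_pα, Category.id_comp]

lemma paHom_id_left_comp {W T U : C'} (A : C') (g : W ⟶ T) (h : T ⟶ U) :
    L.paHom (𝟙 A) (g ≫ h) = L.paHom (𝟙 A) g ≫ L.paHom (𝟙 A) h := by
  rw [← L.paHom_comp, Category.id_comp]

lemma paHom_id_right_comp {W T U : C'} (A : C') (g : W ⟶ T) (h : T ⟶ U) :
    L.paHom (g ≫ h) (𝟙 A) = L.paHom g (𝟙 A) ≫ L.paHom h (𝟙 A) := by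
  rw [← L.paHom_comp, Category.id_comp]

lemma paHom_cancel_right {W T : C'} {h : W ⟶ T} {h' : T ⟶ W} (hh : h ≫ h' = 𝟙 W)
    (A : C') {U : C'} (k : L.pa W A ⟶ U) :
    L.paHom h (𝟙 A) ≫ L.paHom h' (𝟙 A) ≫ k = k := by
  rw [← Category.assoc, ← L.paHom_comp, hh, Category.comp_id, L.paHom_id, Category.id_comp]

/-- Naturality of `pα` against `id ⅋ id ⅋ g`. -/
lemma pα_nat_idid {W T : C'} (A B : C') (g : W ⟶ T) :
    L.pα A B W ≫ L.paHom (𝟙 (L.pa A B)) g =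
      L.paHom (𝟙 A) (L.paHom (𝟙 B) g) ≫ L.pα A B T := by
  have := L.pα_natural (𝟙 A) (𝟙 B) g
  rw [L.paHom_id] at this
  exact this.symm

/-- Naturality of `pα` against `id ⅋ g ⅋ id`. -/
lemma pα_nat_mid {W T : C'} (A B : C') (g : W ⟶ T) :
    L.pα A W B ≫ L.paHom (L.paHom (𝟙 A) g) (𝟙 B) =
      L.paHom (𝟙 A) (L.paHom g (𝟙 B)) ≫ L.pα A T B :=
  (L.pα_natural (𝟙 A) g (𝟙 B)).symm

/-- Naturality of `pα` against `g ⅋ id ⅋ id`. -/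
lemma pα_nat_left {W T : C'} (A B : C') (g : W ⟶ T) :
    L.pα W A B ≫ L.paHom (L.paHom g (𝟙 A)) (𝟙 B) =
      L.paHom g (𝟙 (L.pa A B)) ≫ L.pα T A B := by
  have := L.pα_natural g (𝟙 A) (𝟙 B)
  rw [L.paHom_id] at this
  exact this.symm

/-- Relation (1), with a generic morphism in place of `κ`. -/
lemma rel1 {W P Q : C'} (g : W ⟶ L.pa P Q) (A₁ A₂ : C') :
    L.pα A₁ A₂ W ≫ (L.paHom (𝟙 (L.pa A₁ A₂)) g ≫ L.pα (L.pa A₁ A₂) P Q) =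
      (L.paHom (𝟙 A₁) (L.paHom (𝟙 A₂) g ≫ L.pα A₂ P Q) ≫ L.pα A₁ (L.pa A₂ P) Q) ≫
        L.paHom (L.pα A₁ A₂ P) (𝟙 Q) := by
  rw [← Category.assoc, pα_nat_idid, Category.assoc, L.P8, paHom_id_left_comp]
  simp only [Category.assoc]

/-- Relation (2), with a generic morphism in place of `κ`. -/
lemma rel2 {W P Q : C'} (g : W ⟶ L.pa P Q) (A B : C') :
    L.pα A W B ≫ (L.paHom (L.paHom (𝟙 A) g ≫ L.pα A P Q) (𝟙 B) ≫
        L.pαInv (L.pa A P) Q B) =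
      L.paHom (𝟙 A) (L.paHom g (𝟙 B) ≫ L.pαInv P Q B) ≫ L.pα A P (L.pa Q B) := by
  rw [paHom_id_right_comp, ← Category.assoc, ← Category.assoc, pα_nat_mid,
    paHom_id_left_comp]
  simp only [Category.assoc]
  congr 1
  -- goal: pα A (P⅋Q) B ≫ paHom (pα A P Q) 𝟙 ≫ pαInv (A⅋P) Q B
  --     = paHom 𝟙 (pαInv P Q B) ≫ pα A P (Q⅋B)
  have h8 := L.P8 A P Q B
  have : L.pα A (L.pa P Q) B ≫ L.paHom (L.pα A P Q) (𝟙 B) =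
      L.paHom (𝟙 A) (L.pαInv P Q B) ≫ L.pα A P (L.pa Q B) ≫ L.pα (L.pa A P) Q B := by
    rw [h8, ← Category.assoc, ← L.paHom_comp, L.pαInv_pα]
    simp [L.paHom_id]
  rw [← Category.assoc, this]
  simp only [Category.assoc]
  rw [L.pα_pαInv, Category.comp_id]

/-- Relation (3), with a generic morphism in place of `κ`. -/
lemma rel3 {W P Q : C'} (g : W ⟶ L.pa P Q) (A B : C') :
    L.pα W A B ≫ (L.paHom (L.paHom g (𝟙 A) ≫ L.pαInv P Q A) (𝟙 B) ≫
        L.pαInv P (L.pa Q A) B) =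
      (L.paHom g (𝟙 (L.pa A B)) ≫ L.pαInv P Q (L.pa A B)) ≫
        L.paHom (𝟙 P) (L.pα Q A B) := by
  rw [paHom_id_right_comp, ← Category.assoc, ← Category.assoc, pα_nat_left]
  simp only [Category.assoc]
  congr 1
  -- goal: pα (P⅋Q) A B ≫ paHom (pαInv P Q A) 𝟙 ≫ pαInv P (Q⅋A) B
  --     = pαInv P Q (A⅋B) ≫ paHom 𝟙 (pα Q A B)
  have h8 := L.P8 P Q A B
  have hexp : L.pα (L.pa P Q) A B =
      L.pαInv P Q (L.pa A B) ≫ L.paHom (𝟙 P) (L.pα Q A B) ≫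
        L.pα P (L.pa Q A) B ≫ L.paHom (L.pα P Q A) (𝟙 B) := by
    rw [← h8, ← Category.assoc, L.pαInv_pα, Category.id_comp]
  rw [hexp]
  simp only [Category.assoc]
  rw [paHom_cancel_right L (L.pα_pαInv P Q A) B, L.pα_pαInv, Category.comp_id]

end Helpers

/-- The six relations satisfied by the family `(κ^f_u)` involving `ᾱ` and `ᾱ⁻¹`
(Lemma "pushing κ through"). -/
theorem kappa_relations_assoc {C : Type u} [Category.{v} C] (L : LD C) (hTidy : L.Tidy)
    {X Y Z : C} (f : X ⟶ L.pa Y Z) :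
    (∀ (w : ZW C) (A₁ A₂ : C),
      L.pα A₁ A₂ (Hpa L X w) ≫ kappa L f (ZW.pa (L.pa A₁ A₂) w) =
        kappa L f (ZW.pa A₁ (ZW.pa A₂ w)) ≫
          L.paHom (L.pα A₁ A₂ (Lpa L Y w)) (𝟙 (Rpa L Z w))) ∧
    (∀ (w : ZW C) (A B : C),
      L.pα A (Hpa L X w) B ≫ kappa L f (ZW.painv B (ZW.pa A w)) =
        kappa L f (ZW.pa A (ZW.painv B w))) ∧
    (∀ (w : ZW C) (A B : C),
      L.pα (Hpa L X w) A B ≫ kappa L f (ZW.painv B (ZW.painv A w)) =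
        kappa L f (ZW.painv (L.pa A B) w) ≫
          L.paHom (𝟙 (Lpa L Y w)) (L.pα (Rpa L Z w) A B)) ∧
    (∀ (w : ZW C) (A B : C),
      L.pαInv (Hpa L X w) A B ≫ kappa L f (ZW.painv (L.pa A B) w) =
        kappa L f (ZW.painv B (ZW.painv A w)) ≫
          L.paHom (𝟙 (Lpa L Y w)) (L.pαInv (Rpa L Z w) A B)) ∧
    (∀ (w : ZW C) (A B : C),
      L.pαInv A (Hpa L X w) B ≫ kappa L f (ZW.pa A (ZW.painv B w)) =
        kappa L f (ZW.painv B (ZW.pa A w))) ∧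
    (∀ (w : ZW C) (A₁ A₂ : C),
      L.pαInv A₁ A₂ (Hpa L X w) ≫ kappa L f (ZW.pa A₁ (ZW.pa A₂ w)) =
        kappa L f (ZW.pa (L.pa A₁ A₂) w) ≫
          L.paHom (L.pαInv A₁ A₂ (Lpa L Y w)) (𝟙 (Rpa L Z w))) := by
  have h1 : ∀ (w : ZW C) (A₁ A₂ : C),
      L.pα A₁ A₂ (Hpa L X w) ≫ kappa L f (ZW.pa (L.pa A₁ A₂) w) =
        kappa L f (ZW.pa A₁ (ZW.pa A₂ w)) ≫
          L.paHom (L.pα A₁ A₂ (Lpa L Y w)) (𝟙 (Rpa L Z w)) := by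
    intro w A₁ A₂
    simpa only [kappa, Hpa, Lpa, Rpa] using rel1 L (kappa L f w) A₁ A₂
  have h2 : ∀ (w : ZW C) (A B : C),
      L.pα A (Hpa L X w) B ≫ kappa L f (ZW.painv B (ZW.pa A w)) =
        kappa L f (ZW.pa A (ZW.painv B w)) := by
    intro w A B
    simpa only [kappa, Hpa, Lpa, Rpa] using rel2 L (kappa L f w) A B
  have h3 : ∀ (w : ZW C) (A B : C),
      L.pα (Hpa L X w) A B ≫ kappa L f (ZW.painv B (ZW.painv A w)) =
        kappa L f (ZW.painv (L.pa A B) w) ≫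
          L.paHom (𝟙 (Lpa L Y w)) (L.pα (Rpa L Z w) A B) := by
    intro w A B
    simpa only [kappa, Hpa, Lpa, Rpa] using rel3 L (kappa L f w) A B
  refine ⟨h1, h2, h3, ?_, ?_, ?_⟩
  · intro w A B
    have hX : (L.pα (Hpa L X w) A B ≫ kappa L f (ZW.painv B (ZW.painv A w))) ≫
        L.paHom (𝟙 (Lpa L Y w)) (L.pαInv (Rpa L Z w) A B) =
        kappa L f (ZW.painv (L.pa A B) w) := by
      rw [h3 w A B]
      refine (Category.assoc _ _ _).trans ?_
      have e : L.paHom (𝟙 (Lpa L Y w)) (L.pα (Rpa L Z w) A B) ≫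
          L.paHom (𝟙 (Lpa L Y w)) (L.pαInv (Rpa L Z w) A B) = 𝟙 _ := by
        rw [← L.paHom_comp, L.pα_pαInv, Category.comp_id, L.paHom_id]
      exact (congrArg (kappa L f (ZW.painv (L.pa A B) w) ≫ ·) e).trans (Category.comp_id _)
    rw [← hX]
    exact (congrArg (L.pαInv (Hpa L X w) A B ≫ ·) (Category.assoc _ _ _)).trans
      (pa_cancel_left' L _ A B _)
  · intro w A B
    rw [← h2 w A B]
    exact pa_cancel_left' L A _ B _
  · intro w A₁ A₂
    have hX : (L.pα A₁ A₂ (Hpa L X w) ≫ kappa L f (ZW.pa (L.pa A₁ A₂) w)) ≫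
        L.paHom (L.pαInv A₁ A₂ (Lpa L Y w)) (𝟙 (Rpa L Z w)) =
        kappa L f (ZW.pa A₁ (ZW.pa A₂ w)) := by
      rw [h1 w A₁ A₂]
      refine (Category.assoc _ _ _).trans ?_
      have e : L.paHom (L.pα A₁ A₂ (Lpa L Y w)) (𝟙 (Rpa L Z w)) ≫
          L.paHom (L.pαInv A₁ A₂ (Lpa L Y w)) (𝟙 (Rpa L Z w)) = 𝟙 _ := by
        rw [← L.paHom_comp, L.pα_pαInv, Category.comp_id, L.paHom_id]
      exact (congrArg (kappa L f (ZW.pa A₁ (ZW.pa A₂ w)) ≫ ·) e).trans (Category.comp_id _)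
    rw [← hX]
    exact (congrArg (L.pαInv A₁ A₂ (Hpa L X w) ≫ ·) (Category.assoc _ _ _)).trans
      (pa_cancel_left' L A₁ A₂ _ _)

end LDCoherence
end
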